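/- Let T1 and T2 be tournaments with p and q vertices respectively, both odd. Then det(T1 → T2) = det(T1^+) · det(T2^+), where T^+ denotes the join T → K_1 of T to a single new vertex dominated by all of T. -/

import Mathlib

open scoped Classical

/-- A tournament: irreflexive, and between distinct vertices exactly one arc. -/
def IsTournament {V : Type*} (r : V → V → Prop) : Prop :=
  (∀ i, ¬ r i i) ∧ ∀ i j, i ≠ j → (r i j ↔ ¬ r j i)

/-- Skew-adjacency matrix of a relation. -/
noncomputable def skew {V : Type*} (r : V → V → Prop) : Matrix V V ℤ :=
  Matrix.of fun i j => if r i j then 1 else if r j i then -1 else 0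

/-- Determinant of the skew-adjacency matrix. -/
noncomputable def tdet {V : Type*} [Fintype V] [DecidableEq V] (r : V → V → Prop) : ℤ :=
  (skew r).det

/-- Determinant of the subtournament induced by a finite vertex subset. -/
noncomputable def subdet {V : Type*} [Fintype V] [DecidableEq V] (r : V → V → Prop)
    (s : Finset V) : ℤ :=
  ((skew r).submatrix (fun x : {x // x ∈ s} => x.1) (fun x : {x // x ∈ s} => x.1)).det

/-- Switch of `r` with respect to `W`: arcs between `W` and its complement are reversed. -/
def switchRel {V : Type*} (r : V → V → Prop) (W : Set V) : V → V → Prop :=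
  fun i j => if (i ∈ W ↔ j ∈ W) then r i j else r j i

/-- Switching equivalence of two tournaments on the same vertex set. -/
def SwitchEquiv {V : Type*} (r₁ r₂ : V → V → Prop) : Prop :=
  ∃ W : Set V, ∀ i j, r₂ i j ↔ switchRel r₁ W i j

def IsTransitive {V : Type*} (r : V → V → Prop) : Prop :=
  ∀ a b c, r a b → r b c → r a c

def IsTransitiveOn {V : Type*} (r : V → V → Prop) (X : Finset V) : Prop :=
  ∀ a ∈ X, ∀ b ∈ X, ∀ c ∈ X, r a b → r b c → r a c

/-- A 4-set inducing a diamond: a vertex dominating or dominated by a 3-cycle. -/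
def IsDiamond {V : Type*} (r : V → V → Prop) (X : Finset V) : Prop :=
  ∃ a b c d : V, X = {a, b, c, d} ∧ a ≠ b ∧ a ≠ c ∧ a ≠ d ∧ b ≠ c ∧ b ≠ d ∧ c ≠ d ∧
    r b c ∧ r c d ∧ r d b ∧ ((r a b ∧ r a c ∧ r a d) ∨ (r b a ∧ r c a ∧ r d a))

/-- Number of diamonds of a tournament. -/
noncomputable def numDiamonds {V : Type*} [Fintype V] (r : V → V → Prop) : ℕ :=
  Set.ncard {X : Finset V | IsDiamond r X}

/-- The tournament `L_n`: a transitive chain `u_0 → ⋯ → u_{n-2}` together with a last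
vertex alternating along the chain, starting with `u_{n-1} → u_0`. -/
def LRel (n : ℕ) : Fin n → Fin n → Prop := fun i j =>
  (j.val < n - 1 ∧ i.val < j.val) ∨
  (j.val = n - 1 ∧ i.val < n - 1 ∧ i.val % 2 = 1) ∨
  (i.val = n - 1 ∧ j.val < n - 1 ∧ j.val % 2 = 0)

/-- Join of two tournaments: all arcs from the first to the second. -/
def joinRel {A B : Type*} (r : A → A → Prop) (s : B → B → Prop) : A ⊕ B → A ⊕ B → Prop :=
  fun x y => match x, y with
  | .inl a, .inl a' => r a a'
  | .inr b, .inr b' => s b b'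
  | .inl _, .inr _ => True
  | .inr _, .inl _ => False

/-- `T⁺`: add one new vertex dominated by every vertex of `T`. -/
def plusRel {A : Type*} (r : A → A → Prop) : Option A → Option A → Prop :=
  fun x y => match x, y with
  | some a, some b => r a b
  | some _, none => True
  | _, _ => False

/-- Blowup of `r` by the family of tournaments `t`. -/
def blowupG {ι : Type*} [DecidableEq ι] (r : ι → ι → Prop) {κ : ι → Type*}
    (t : ∀ i, κ i → κ i → Prop) : (Σ i, κ i) → (Σ i, κ i) → Prop :=
  fun x y => if h : x.1 = y.1 then t y.1 (h ▸ x.2) y.2 else r x.1 y.1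

/-- Transitive `(a_1,…,a_n)`-blowup of `r`. -/
def blowup {ι : Type*} [DecidableEq ι] (r : ι → ι → Prop) (a : ι → ℕ) :
    (Σ i, Fin (a i)) → (Σ i, Fin (a i)) → Prop :=
  blowupG r (fun _ p q => p < q)

/-- Membership in `𝒟_k`: every subtournament has determinant at most `k²`. -/
def memD {V : Type*} [Fintype V] [DecidableEq V] (r : V → V → Prop) (k : ℕ) : Prop :=
  ∀ s : Finset V, subdet r s ≤ (k : ℤ) ^ 2

open Matrix

noncomputable section AuxDet

variable {m n : Type*} [Fintype m] [Fintype n] [DecidableEq m] [DecidableEq n]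

/-- all ones matrix -/
def onesM (m n : Type*) : Matrix m n ℤ := Matrix.of fun _ _ => 1

/-- row reduction matrix: subtract row a from every other row -/
def Rmat (a : m) : Matrix m m ℤ :=
  Matrix.of fun i j => (if i = j then 1 else 0) - (if j = a ∧ i ≠ a then 1 else 0)

def Smat (a : m) : Matrix m m ℤ :=
  Matrix.of fun i j => (if i = j then 1 else 0) + (if j = a ∧ i ≠ a then 1 else 0)

lemma Rmat_mul_Smat (a : m) : Rmat a * Smat a = 1 := by
  ext i j
  simp only [Matrix.mul_apply, Rmat, Smat, Matrix.of_apply, sub_mul, mul_add, Matrix.one_apply]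
  rw [Finset.sum_add_distrib, Finset.sum_sub_distrib, Finset.sum_sub_distrib]
  simp [ite_and, mul_ite, ite_mul, Finset.sum_ite_eq, Finset.sum_ite_eq', eq_comm]
  have key : ∀ i' j' : m, i' ≠ j' →
      (∑ x : m, if j' = x then (0:ℤ) else if i' = x then 1 else 0) = 1 := by
    intro i' j' h
    rw [Finset.sum_eq_single i']
    · simp [Ne.symm h]
    · intro x _ hx
      by_cases hj : j' = x
      · simp [hj]
      · simp only [if_neg hj, if_neg (fun h' : i' = x => hx h'.symm)]
    · simp
  by_cases h1 : i = j
  · subst h1; by_cases h2 : i = a <;> simp_all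
  · by_cases h2 : j = a
    · subst h2
      have z : (∑ x : m, if j = x then (0:ℤ) else if j = x then 1 else 0) = 0 :=
        Finset.sum_eq_zero (by intro x _; by_cases h : j = x <;> simp [h])
      simp [h1, Ne.symm h1, key i j h1, z]
    · have h3 : a ≠ j := fun h => h2 h.symm
      simp [h1, h2, h3]

lemma Rmat_det_sq (a : m) : det (Rmat a) * det (Rmat a) = 1 := by
  have h : det (Rmat a) * det (Smat a) = 1 := by
    rw [← det_mul, Rmat_mul_Smat, det_one]
  have : det (Rmat a) = 1 ∨ det (Rmat a) = -1 := by
    rcases Int.isUnit_iff.mp (IsUnit.of_mul_eq_one _ h) with h' | h' <;> [left; right] <;> exact h'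
  rcases this with h' | h' <;> rw [h'] <;> ring

lemma Rmat_rowsum (a : m) (i : m) : ∑ k, Rmat a i k = if i = a then 1 else 0 := by
  simp only [Rmat, Matrix.of_apply]
  rw [Finset.sum_sub_distrib]
  simp [ite_and, Finset.sum_ite_eq, Finset.sum_ite_eq']
  by_cases h : i = a <;> simp [h]

lemma Rmat_ones_Rmat (a : m) (b : n) :
    Rmat a * onesM m n * (Rmat b)ᵀ = Matrix.single a b 1 := by
  have h1 : Rmat a * onesM m n = Matrix.of fun i (_ : n) => if i = a then 1 else 0 := by
    ext i j
    simp only [Matrix.mul_apply, onesM, Matrix.of_apply, mul_one]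
    exact Rmat_rowsum a i
  rw [h1]
  ext i j
  simp only [Matrix.mul_apply, Matrix.transpose_apply, Matrix.of_apply, ite_mul, one_mul, zero_mul]
  by_cases h : i = a
  · subst h
    simp only [if_true, Rmat_rowsum b j]
    rcases eq_or_ne j b with hj | hj
    · simp [hj, Matrix.single]
    · simp [hj, Matrix.single, (Ne.symm hj : b ≠ j)]
  · simp [h, Matrix.single, Ne.symm h]


lemma std_apply (a : m) (b : n) (i : m) (j : n) :
    single a b (1:ℤ) i j = if i = a ∧ j = b then 1 else 0 := by
  simp only [Matrix.single, Matrix.of_apply]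
  by_cases h1 : i = a <;> by_cases h2 : j = b <;> subst_vars <;> simp_all <;>
    simp_all [eq_comm]

lemma keyLemma (a : m) (b : n) (A : Matrix m m ℤ) (B : Matrix n n ℤ) (hB : B.det = 0) :
    (fromBlocks A (single a b 1) (-(single b a 1)) B).det =
    (A.updateCol a (Pi.single a 1)).det * (B.updateCol b (Pi.single b 1)).det := by
  set M := fromBlocks A (single a b 1) (-(single b a 1)) B with hM
  have e1 : M = updateCol M (Sum.inl a)
      (Sum.elim (fun i' => A i' a) (0 : n → ℤ) +
       Sum.elim (0 : m → ℤ) (fun j' => -((Pi.single b 1 : n → ℤ) j'))) := by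
    rw [show (Sum.elim (fun i' => A i' a) (0 : n → ℤ) +
        Sum.elim (0 : m → ℤ) (fun j' => -((Pi.single b 1 : n → ℤ) j')) :
        m ⊕ n → ℤ) = fun x => M x (Sum.inl a) by
      funext x; cases x with
      | inl i' => simp [hM]
      | inr j' => simp [hM, std_apply, Pi.single_apply]]
    rw [updateCol_eq_self]
  have hM1 : updateCol M (Sum.inl a) (Sum.elim (fun i' => A i' a) (0 : n → ℤ)) =
      fromBlocks A (single a b 1) 0 B := by
    ext x y
    cases x with
    | inl i' =>
      cases y with
      | inl j' => rcases eq_or_ne j' a with h | h <;>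
          simp [updateCol_apply, hM, h]
      | inr j' => simp [updateCol_apply, hM]
    | inr i' =>
      cases y with
      | inl j' => rcases eq_or_ne j' a with h | h <;>
          simp [updateCol_apply, hM, h, std_apply]
      | inr j' => simp [updateCol_apply, hM]
  set M2 := updateCol M (Sum.inl a)
      (Sum.elim (0 : m → ℤ) (fun j' => -((Pi.single b 1 : n → ℤ) j'))) with hM2
  have e2 : M2 = updateCol M2 (Sum.inr b)
      (Sum.elim (0 : m → ℤ) (fun j' => B j' b) +
       Sum.elim (Pi.single a (1:ℤ) : m → ℤ) (0 : n → ℤ)) := by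
    rw [show (Sum.elim (0 : m → ℤ) (fun j' => B j' b) +
        Sum.elim (Pi.single a (1:ℤ) : m → ℤ) (0 : n → ℤ) : m ⊕ n → ℤ) =
        fun x => M2 x (Sum.inr b) by
      funext x; cases x with
      | inl i' => simp [hM2, hM, updateCol_apply, std_apply, Pi.single_apply]
      | inr j' => simp [hM2, hM, updateCol_apply]]
    rw [updateCol_eq_self]
  have hM21 : updateCol M2 (Sum.inr b) (Sum.elim (0 : m → ℤ) (fun j' => B j' b)) =
      fromBlocks (A.updateCol a 0) 0 (-(single b a 1)) B := by
    ext x y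
    cases x with
    | inl i' =>
      cases y with
      | inl j' => rcases eq_or_ne j' a with h | h <;>
          simp [updateCol_apply, hM2, hM, h]
      | inr j' => rcases eq_or_ne j' b with h | h <;>
          simp [updateCol_apply, hM2, hM, h, std_apply]
    | inr i' =>
      cases y with
      | inl j' => rcases eq_or_ne j' a with h | h <;>
          simp [updateCol_apply, hM2, hM, h, std_apply, Pi.single_apply]
      | inr j' => rcases eq_or_ne j' b with h | h <;>
          simp [updateCol_apply, hM2, hM, h]
  have hM22 : updateCol M2 (Sum.inr b) (Sum.elim (Pi.single a (1:ℤ) : m → ℤ) (0 : n → ℤ)) =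
      (fromBlocks (A.updateCol a (Pi.single a 1)) 0 0
        (B.updateCol b (fun j' => -((Pi.single b 1 : n → ℤ) j')))).submatrix id
        (Equiv.swap (Sum.inl a) (Sum.inr b)) := by
    have swl : ∀ j' : m, (Equiv.swap (Sum.inl a) (Sum.inr b) : Equiv.Perm (m ⊕ n))
        (Sum.inl j') = if j' = a then Sum.inr b else Sum.inl j' := by
      intro j'; rcases eq_or_ne j' a with h | h <;>
        simp [h, Equiv.swap_apply_of_ne_of_ne]
    have swr : ∀ j' : n, (Equiv.swap (Sum.inl a) (Sum.inr b) : Equiv.Perm (m ⊕ n))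
        (Sum.inr j') = if j' = b then Sum.inl a else Sum.inr j' := by
      intro j'; rcases eq_or_ne j' b with h | h <;>
        simp [h, Equiv.swap_apply_of_ne_of_ne]
    ext x y
    cases x with
    | inl i' =>
      cases y with
      | inl j' => rcases eq_or_ne j' a with h | h <;>
          simp [updateCol_apply, hM2, hM, h, swl, std_apply, Pi.single_apply]
      | inr j' => rcases eq_or_ne j' b with h | h <;>
          simp [updateCol_apply, hM2, hM, h, swr, std_apply, Pi.single_apply]
    | inr i' =>
      cases y with
      | inl j' => rcases eq_or_ne j' a with h | h <;>
          simp [updateCol_apply, hM2, hM, h, swl, std_apply, Pi.single_apply]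
      | inr j' => rcases eq_or_ne j' b with h | h <;>
          simp [updateCol_apply, hM2, hM, h, swr, std_apply, Pi.single_apply]
  have hcolneg : (B.updateCol b (fun j' => -((Pi.single b 1 : n → ℤ) j'))).det =
      -(B.updateCol b (Pi.single b 1)).det := by
    have h : (fun j' => -((Pi.single b 1 : n → ℤ) j')) = (-1 : ℤ) • (Pi.single b 1 : n → ℤ) := by
      funext j'; simp
    rw [h, det_updateCol_smul]; ring
  calc M.det = (updateCol M (Sum.inl a)
        (Sum.elim (fun i' => A i' a) (0 : n → ℤ))).det + M2.det := by
        rw [hM2, ← det_updateCol_add]; exact congrArg det e1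
    _ = 0 + M2.det := by rw [hM1, det_fromBlocks_zero₂₁, hB, mul_zero]
    _ = (updateCol M2 (Sum.inr b) (Sum.elim (0 : m → ℤ) (fun j' => B j' b))).det +
        (updateCol M2 (Sum.inr b)
          (Sum.elim (Pi.single a (1:ℤ) : m → ℤ) (0 : n → ℤ))).det := by
        rw [zero_add, ← det_updateCol_add]; exact congrArg det e2
    _ = 0 + (updateCol M2 (Sum.inr b)
          (Sum.elim (Pi.single a (1:ℤ) : m → ℤ) (0 : n → ℤ))).det := by
        rw [hM21, det_fromBlocks_zero₁₂, hB, mul_zero]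
    _ = (A.updateCol a (Pi.single a 1)).det * (B.updateCol b (Pi.single b 1)).det := by
        rw [zero_add, hM22, det_permute' (Equiv.swap (Sum.inl a) (Sum.inr b)),
          det_fromBlocks_zero₂₁, hcolneg, Equiv.Perm.sign_swap (by simp)]
        push_cast
        ring


/-- The quantity `det(T⁺)` in reduced form. -/
def Fdet (A : Matrix m m ℤ) (a : m) : ℤ :=
  ((Rmat a * A * (Rmat a)ᵀ).updateCol a (Pi.single a 1)).det

lemma glKey (a : m) (b : n) (A : Matrix m m ℤ) (B : Matrix n n ℤ) (hB : B.det = 0) :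
    (fromBlocks A (onesM m n) (-(onesM n m)) B).det = Fdet A a * Fdet B b := by
  set R : Matrix (m ⊕ n) (m ⊕ n) ℤ := fromBlocks (Rmat a) 0 0 (Rmat b) with hR
  set M : Matrix (m ⊕ n) (m ⊕ n) ℤ := fromBlocks A (onesM m n) (-(onesM n m)) B with hMM
  have hc : R * M * Rᵀ = fromBlocks (Rmat a * A * (Rmat a)ᵀ) (single a b 1)
      (-(single b a 1)) (Rmat b * B * (Rmat b)ᵀ) := by
    rw [hR, hMM, fromBlocks_transpose, fromBlocks_multiply, fromBlocks_multiply]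
    rw [← Rmat_ones_Rmat a b, ← Rmat_ones_Rmat b a]
    congr 1 <;> simp [Matrix.mul_neg, Matrix.neg_mul]
  have hdetR : R.det = (Rmat a).det * (Rmat b).det := by
    rw [hR, det_fromBlocks_zero₂₁]
  have hsq : R.det * R.det = 1 := by
    rw [hdetR]
    have h1 := Rmat_det_sq a
    have h2 := Rmat_det_sq b
    nlinarith [h1, h2]
  have hdet : M.det = (R * M * Rᵀ).det := by
    rw [det_mul, det_mul, det_transpose]
    linear_combination -M.det * hsq
  have hB' : (Rmat b * B * (Rmat b)ᵀ).det = 0 := by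
    rw [det_mul, det_mul, det_transpose, hB]; ring
  rw [hdet, hc, keyLemma a b _ _ hB']
  rfl

lemma Fdet_punit_zero (u : PUnit.{1}) : Fdet (0 : Matrix PUnit PUnit ℤ) u = 1 := by
  unfold Fdet
  rw [Matrix.mul_zero, Matrix.zero_mul, det_unique]
  simp [updateCol_apply]

end AuxDet


section Tour

lemma skew_det_zero {V : Type*} [Fintype V] [DecidableEq V] (r : V → V → Prop)
    (hr : IsTournament r) (h : Odd (Fintype.card V)) : (skew r).det = 0 := by
  have ht : (skew r)ᵀ = -(skew r) := by
    ext i j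
    rcases eq_or_ne i j with h' | h'
    · subst h'; simp [skew, hr.1 i]
    · by_cases hij : r i j
      · have hji : ¬ r j i := (hr.2 i j h').mp hij
        simp [skew, hij, hji]
      · have hji : r j i := (hr.2 j i (Ne.symm h')).mpr (by simpa using hij)
        simp [skew, hij, hji]
  have h1 : (skew r).det = (-(skew r)).det := by
    rw [← ht, Matrix.det_transpose]
  rw [Matrix.det_neg, Odd.neg_one_pow h] at h1
  linarith

lemma skew_join {A B : Type*} (r : A → A → Prop) (s : B → B → Prop) :
    skew (joinRel r s) = Matrix.fromBlocks (skew r) (onesM A B) (-(onesM B A)) (skew s) := by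
  ext x y
  cases x <;> cases y <;>
    simp [skew, joinRel, onesM, Matrix.fromBlocks] <;> exact rfl

lemma skew_plus_det {V : Type*} [Fintype V] [DecidableEq V] (r : V → V → Prop) :
    (skew (plusRel r)).det =
    (Matrix.fromBlocks (skew r) (onesM V PUnit) (-(onesM PUnit V))
      (0 : Matrix PUnit PUnit ℤ)).det := by
  rw [← Matrix.det_submatrix_equiv_self (Equiv.optionEquivSumPUnit V).symm
    (skew (plusRel r))]
  congr 1
  ext x y
  cases x <;> cases y <;>
    simp [skew, plusRel, onesM, Matrix.fromBlocks] <;> exact rfl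

end Tour

theorem stmt3 {p q : ℕ} (hp : Odd p) (hq : Odd q)
    (r : Fin p → Fin p → Prop) (s : Fin q → Fin q → Prop)
    (hr : IsTournament r) (hs : IsTournament s) :
    tdet (joinRel r s) = tdet (plusRel r) * tdet (plusRel s) := by
  have hpp : 0 < p := hp.pos
  have hqq : 0 < q := hq.pos
  set a : Fin p := ⟨0, hpp⟩
  set b : Fin q := ⟨0, hqq⟩
  have hdetS : (skew s).det = 0 := skew_det_zero s hs (by simpa using hq)
  have hdetR : (skew r).det = 0 := skew_det_zero r hr (by simpa using hp)
  have h0 : (0 : Matrix PUnit PUnit ℤ).det = 0 := by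
    rw [Matrix.det_unique]; rfl
  have hj : tdet (joinRel r s) = Fdet (skew r) a * Fdet (skew s) b := by
    unfold tdet
    rw [skew_join, glKey a b _ _ hdetS]
  have h1 : tdet (plusRel r) = Fdet (skew r) a := by
    unfold tdet
    rw [skew_plus_det, glKey a PUnit.unit _ _ h0, Fdet_punit_zero, mul_one]
  have h2 : tdet (plusRel s) = Fdet (skew s) b := by
    unfold tdet
    rw [skew_plus_det, glKey b PUnit.unit _ _ h0, Fdet_punit_zero, mul_one]
  rw [hj, h1, h2]
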